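/- Let s ≥ 1 be an integer. Klee's function satisfies Φ_s(n) = n·Σ_{d : d^s | n} μ(d)/d^s for every positive integer n, where μ is the Möbius function. -/

import Mathlib

open scoped BigOperators
open ArithmeticFunction
open scoped ArithmeticFunction.Moebius

/-- Generalized gcd `(a,b)_s`: the largest `d ^ s` (with `d` a positive integer)
dividing both `a` and `b`. -/
def ggcd (s a b : ℕ) : ℕ :=
  (Nat.findGreatest (fun d => d ^ s ∣ a ∧ d ^ s ∣ b) (max a b)) ^ s

/-- The Cohen–Ramanujan sum `c_k^{(s)}(n) = Σ_{h=1, (h,k^s)_s=1}^{k^s} e^{2πinh/k^s}`. -/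
noncomputable def CRS (s k n : ℕ) : ℂ :=
  ∑ h ∈ Finset.Icc 1 (k ^ s),
    if ggcd s h (k ^ s) = 1 then
      Complex.exp (2 * Real.pi * Complex.I * n * h / (k ^ s))
    else 0

/-- The core of `k`: its largest squarefree divisor. -/
def core (k : ℕ) : ℕ := ∏ p ∈ k.primeFactors, p

/-- `k* = k / k̄`. -/
def spart (k : ℕ) : ℕ := k / core k

/-- `ξ_d(k) = d` if `d ∣ k`, and `0` otherwise. -/
def xi (d k : ℕ) : ℕ := if d ∣ k then d else 0

/-- Klee's function `Φ_s(n) = n ∏_{p prime, p^s ∣ n} (1 - 1/p^s)`. -/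
noncomputable def Klee (s n : ℕ) : ℂ :=
  n * ∏ p ∈ n.primeFactors.filter (fun p => p ^ s ∣ n), (1 - 1 / (p : ℂ) ^ s)

/-- The Jordan totient function `J_s(n) = n^s ∏_{p ∣ n} (1 - 1/p^s)` (as a complex number). -/
noncomputable def Jordan (s n : ℕ) : ℂ :=
  (n : ℂ) ^ s * ∏ p ∈ n.primeFactors, (1 - 1 / (p : ℂ) ^ s)


lemma my_pow_prod_dvd {s n : ℕ} {A : Finset ℕ} (hA : ∀ p ∈ A, Nat.Prime p)
    (hd : ∀ p ∈ A, p ^ s ∣ n) : (∏ p ∈ A, p) ^ s ∣ n := by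
  classical
  induction A using Finset.induction_on with
  | empty => simp
  | @insert a A ha ih =>
    rw [Finset.prod_insert ha, mul_pow]
    have hcop : Nat.Coprime (a ^ s) ((∏ p ∈ A, p) ^ s) := by
      apply Nat.Coprime.pow
      exact Nat.coprime_prod_right_iff.mpr fun p hp =>
        (Nat.coprime_primes (hA a (Finset.mem_insert_self a A))
          (hA p (Finset.mem_insert_of_mem hp))).mpr (fun h => ha (h ▸ hp))
    exact hcop.mul_dvd_of_dvd_of_dvd (hd a (Finset.mem_insert_self a A))
      (ih (fun p hp => hA p (Finset.mem_insert_of_mem hp))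
          (fun p hp => hd p (Finset.mem_insert_of_mem hp)))

lemma my_squarefree_prod {A : Finset ℕ} (hA : ∀ p ∈ A, Nat.Prime p) :
    Squarefree (∏ p ∈ A, p) := by
  classical
  induction A using Finset.induction_on with
  | empty => simpa using squarefree_one
  | @insert a A ha ih =>
    rw [Finset.prod_insert ha]
    have hcop : Nat.Coprime a (∏ p ∈ A, p) :=
      Nat.coprime_prod_right_iff.mpr fun p hp =>
        (Nat.coprime_primes (hA a (Finset.mem_insert_self a A))
          (hA p (Finset.mem_insert_of_mem hp))).mpr (fun h => ha (h ▸ hp))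
    exact (Nat.squarefree_mul hcop).mpr
      ⟨(hA a (Finset.mem_insert_self a A)).squarefree,
        ih (fun p hp => hA p (Finset.mem_insert_of_mem hp))⟩

/-- Klee's function satisfies `Φ_s(n) = n·Σ_{d^s ∣ n} μ(d)/d^s`. -/
theorem Klee_eq_sum (s : ℕ) (hs : 1 ≤ s) (n : ℕ) (hn : 0 < n) :
    Klee s n = (n : ℂ) *
      ∑ d ∈ n.divisors.filter (fun d => d ^ s ∣ n), (μ d : ℂ) / (d : ℂ) ^ s := by
  classical
  set T := n.primeFactors.filter (fun p => p ^ s ∣ n) with hT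
  have hTprime : ∀ p ∈ T, Nat.Prime p := fun p hp =>
    Nat.prime_of_mem_primeFactors (Finset.mem_filter.mp hp).1
  have key : ∑ d ∈ n.divisors.filter (fun d => d ^ s ∣ n), (μ d : ℂ) / (d : ℂ) ^ s
      = ∑ A ∈ T.powerset, ∏ p ∈ A, (-1 / (p : ℂ) ^ s) := by
    rw [← Finset.sum_filter_of_ne (p := fun d => Squarefree d)
      (fun d _ hne => by
        by_contra hsf
        exact hne (by simp [moebius_eq_zero_of_not_squarefree hsf]))]
    refine Finset.sum_nbij' (fun d => d.primeFactors) (fun A => ∏ p ∈ A, p) ?_ ?_ ?_ ?_ ?_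
    · intro d hd
      simp only [Finset.mem_filter, Nat.mem_divisors] at hd
      obtain ⟨⟨⟨hdn, hn0⟩, hds⟩, hsf⟩ := hd
      refine Finset.mem_powerset.mpr fun p hp => ?_
      have hpp : Nat.Prime p := Nat.prime_of_mem_primeFactors hp
      have hpd : p ∣ d := Nat.dvd_of_mem_primeFactors hp
      refine Finset.mem_filter.mpr ⟨Nat.mem_primeFactors.mpr ⟨hpp, hpd.trans hdn, hn0⟩, ?_⟩
      exact dvd_trans (pow_dvd_pow_of_dvd hpd s) hds
    · intro A hA
      rw [Finset.mem_powerset] at hA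
      have hAp : ∀ p ∈ A, Nat.Prime p := fun p hp => hTprime p (hA hp)
      have hdvd : (∏ p ∈ A, p) ^ s ∣ n :=
        my_pow_prod_dvd hAp (fun p hp => (Finset.mem_filter.mp (hA hp)).2)
      have hdvd' : (∏ p ∈ A, p) ∣ n :=
        (dvd_pow_self _ (by omega : s ≠ 0)).trans hdvd
      exact Finset.mem_filter.mpr ⟨Finset.mem_filter.mpr
        ⟨Nat.mem_divisors.mpr ⟨hdvd', hn.ne'⟩, hdvd⟩, my_squarefree_prod hAp⟩
    · intro d hd
      simp only [Finset.mem_filter] at hd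
      exact Nat.prod_primeFactors_of_squarefree hd.2
    · intro A hA
      rw [Finset.mem_powerset] at hA
      exact Nat.primeFactors_prod (fun p hp => hTprime p (hA hp))
    · intro d hd
      simp only [Finset.mem_filter, Nat.mem_divisors] at hd
      obtain ⟨⟨⟨hdn, hn0⟩, hds⟩, hsf⟩ := hd
      have hdp : ∀ p ∈ d.primeFactors, Nat.Prime p := fun p hp =>
        Nat.prime_of_mem_primeFactors hp
      have h1 : μ d = ∏ p ∈ d.primeFactors, μ p := by
        conv_lhs => rw [← Nat.prod_primeFactors_of_squarefree hsf]
        exact ArithmeticFunction.IsMultiplicative.map_prod_of_prime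
          isMultiplicative_moebius _ hdp
      have h2 : (d : ℂ) = ∏ p ∈ d.primeFactors, (p : ℂ) := by
        conv_lhs => rw [← Nat.prod_primeFactors_of_squarefree hsf]
        push_cast; ring
      rw [h1, h2]
      push_cast
      rw [← Finset.prod_pow, ← Finset.prod_div_distrib]
      refine Finset.prod_congr rfl fun p hp => ?_
      rw [moebius_apply_prime (hdp p hp)]
      push_cast; ring
  rw [key]
  unfold Klee
  rw [← hT]
  congr 1
  have : ∀ p ∈ T, (1 : ℂ) - 1 / (p : ℂ) ^ s = (-1 / (p : ℂ) ^ s) + 1 := by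
    intro p hp; ring
  rw [Finset.prod_congr rfl this, Finset.prod_add]
  simp
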